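/- For the type A(2k,2ℓ)^{(4)} data and for each i ∈ {1,2}: if u, v and u+v all lie in Ṙ₀(i)^× and ‖u‖ = ‖v‖ ≤ ‖u+v‖ (Euclidean norms), then S_{u+v}(i) ⊆ S_u(i) + S_v(i); that is, every m ∈ ℤ with u+v+mδ ∈ R₀(i)^× can be written m = m₁ + m₂ with u + m₁δ ∈ R₀(i)^× and v + m₂δ ∈ R₀(i)^×. (Property (2.8) of the paper for this type.) -/

import Mathlib

/-- The ambient real vector space with basis `δ, ε₁, …, ε_k, δ₁, …, δ_ℓ`. -/
abbrev Vkl (k l : ℕ) := ℝ × (Fin k → ℝ) × (Fin l → ℝ)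

/-- The basis vector `δ`. -/
def del {k l : ℕ} : Vkl k l := (1, 0, 0)

/-- The basis vector `ε_i`. -/
def eps {k l : ℕ} (i : Fin k) : Vkl k l := (0, Pi.single i 1, 0)

/-- The basis vector `δ_j`. -/
def dl {k l : ℕ} (j : Fin l) : Vkl k l := (0, 0, Pi.single j 1)

/-- The symmetric bilinear form with `B(δ,·) = 0`, `B(ε_i,ε_r) = δ_{ir}`,
`B(δ_j,δ_s) = -δ_{js}` and `B(ε_i,δ_j) = 0`. -/
def B {k l : ℕ} (v w : Vkl k l) : ℝ :=
  (∑ i, v.2.1 i * w.2.1 i) - (∑ j, v.2.2 j * w.2.2 j)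

/-- The set of signs `{1, -1}`. -/
def sgns : Set ℝ := {1, -1}

/-- The nonzero roots of the first affine component of the even part,
for type `A(2k,2ℓ)⁽⁴⁾`. -/
def R01x (k l : ℕ) : Set (Vkl k l) :=
  {v | ∃ (m : ℤ) (σ : ℝ) (j : Fin l), σ ∈ sgns ∧
    v = (2 * m + 1) • del + σ • dl j} ∪
  {v | ∃ (m : ℤ) (σ τ : ℝ) (j s : Fin l), σ ∈ sgns ∧ τ ∈ sgns ∧ j ≠ s ∧
    v = (2 * m) • del + σ • dl j + τ • dl s} ∪
  {v | ∃ (m : ℤ) (σ : ℝ) (j : Fin l), σ ∈ sgns ∧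
    v = (4 * m) • del + σ • ((2 : ℝ) • dl j)}

/-- The nonzero roots of the second affine component of the even part,
for type `A(2k,2ℓ)⁽⁴⁾`. -/
def R02x (k l : ℕ) : Set (Vkl k l) :=
  {v | ∃ (m : ℤ) (σ : ℝ) (i : Fin k), σ ∈ sgns ∧
    v = (2 * m) • del + σ • eps i} ∪
  {v | ∃ (m : ℤ) (σ τ : ℝ) (i r : Fin k), σ ∈ sgns ∧ τ ∈ sgns ∧ i ≠ r ∧
    v = (2 * m) • del + σ • eps i + τ • eps r} ∪
  {v | ∃ (m : ℤ) (σ : ℝ) (i : Fin k), σ ∈ sgns ∧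
    v = (4 * m + 2) • del + σ • ((2 : ℝ) • eps i)}

/-- The Euclidean norm on `Vkl k l` for which `δ, ε₁, …, ε_k, δ₁, …, δ_ℓ` are
orthonormal. -/
noncomputable def nrm {k l : ℕ} (v : Vkl k l) : ℝ :=
  Real.sqrt (v.1 ^ 2 + ∑ i, (v.2.1 i) ^ 2 + ∑ j, (v.2.2 j) ^ 2)

/-! ### Auxiliary lemmas -/

lemma sum_single_sq {n : ℕ} (a : ℝ) (j : Fin n) :
    ∑ x, (a * (Pi.single j 1 : Fin n → ℝ) x) ^ 2 = a ^ 2 := by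
  simp [Pi.single_apply, mul_ite, ite_pow, Finset.sum_ite_eq']

lemma sum_single' {n : ℕ} (a : ℝ) (j : Fin n) :
    ∑ x, a * (Pi.single j 1 : Fin n → ℝ) x = a := by
  simp [Pi.single_apply, mul_ite, Finset.sum_ite_eq']

lemma sum_two_single_sq {n : ℕ} (a b : ℝ) {j s : Fin n} (h : j ≠ s) :
    ∑ x, (a * (Pi.single j 1 : Fin n → ℝ) x + b * (Pi.single s 1 : Fin n → ℝ) x) ^ 2
      = a ^ 2 + b ^ 2 := by
  have e : ∀ x, (a * (Pi.single j 1 : Fin n → ℝ) x + b * (Pi.single s 1 : Fin n → ℝ) x) ^ 2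
      = (a * (Pi.single j 1 : Fin n → ℝ) x) ^ 2 + (b * (Pi.single s 1 : Fin n → ℝ) x) ^ 2 := by
    intro x
    rcases eq_or_ne x j with rfl | hxj
    · simp [Pi.single_apply, h.symm]
    · rcases eq_or_ne x s with rfl | hxs
      · simp [Pi.single_apply, hxj]
      · simp [Pi.single_apply, hxj, hxs]
  rw [Finset.sum_congr rfl fun x _ => e x, Finset.sum_add_distrib, sum_single_sq, sum_single_sq]

lemma sq_of_sgns {σ : ℝ} (hσ : σ ∈ sgns) : σ ^ 2 = 1 := by
  rcases hσ with rfl | rfl <;> norm_num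

lemma nrm_dl_short {k l : ℕ} {σ : ℝ} {j : Fin l} (hσ : σ ∈ sgns) :
    nrm (σ • dl j : Vkl k l) = 1 := by
  simp [nrm, dl, Pi.smul_apply, smul_eq_mul, sum_single_sq, sq_of_sgns hσ]

lemma nrm_dl_mid {k l : ℕ} {σ τ : ℝ} {j s : Fin l} (hσ : σ ∈ sgns) (hτ : τ ∈ sgns)
    (hjs : j ≠ s) : nrm (σ • dl j + τ • dl s : Vkl k l) = Real.sqrt 2 := by
  simp [nrm, dl, Pi.smul_apply, smul_eq_mul, sum_two_single_sq _ _ hjs,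
    sq_of_sgns hσ, sq_of_sgns hτ]
  norm_num

lemma nrm_dl_long {k l : ℕ} {σ : ℝ} {j : Fin l} (hσ : σ ∈ sgns) :
    nrm (σ • ((2:ℝ) • dl j) : Vkl k l) = 2 := by
  have : ∑ x, ((σ * 2) * (Pi.single j 1 : Fin l → ℝ) x) ^ 2 = 4 := by
    rw [sum_single_sq]; rcases hσ with rfl | rfl <;> norm_num
  simp [nrm, dl, Pi.smul_apply, smul_eq_mul, smul_smul, this]
  rw [show (4:ℝ) = 2^2 by norm_num, Real.sqrt_sq (by norm_num)]

lemma nrm_eps_short {k l : ℕ} {σ : ℝ} {i : Fin k} (hσ : σ ∈ sgns) :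
    nrm (σ • eps i : Vkl k l) = 1 := by
  simp [nrm, eps, Pi.smul_apply, smul_eq_mul, sum_single_sq, sq_of_sgns hσ]

lemma nrm_eps_mid {k l : ℕ} {σ τ : ℝ} {i r : Fin k} (hσ : σ ∈ sgns) (hτ : τ ∈ sgns)
    (hir : i ≠ r) : nrm (σ • eps i + τ • eps r : Vkl k l) = Real.sqrt 2 := by
  simp [nrm, eps, Pi.smul_apply, smul_eq_mul, sum_two_single_sq _ _ hir,
    sq_of_sgns hσ, sq_of_sgns hτ]
  norm_num

lemma nrm_eps_long {k l : ℕ} {σ : ℝ} {i : Fin k} (hσ : σ ∈ sgns) :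
    nrm (σ • ((2:ℝ) • eps i) : Vkl k l) = 2 := by
  have : ∑ x, ((σ * 2) * (Pi.single i 1 : Fin k → ℝ) x) ^ 2 = 4 := by
    rw [sum_single_sq]; rcases hσ with rfl | rfl <;> norm_num
  simp [nrm, eps, Pi.smul_apply, smul_eq_mul, smul_smul, this]
  rw [show (4:ℝ) = 2^2 by norm_num, Real.sqrt_sq (by norm_num)]

lemma one_lt_sqrt2 : (1:ℝ) < Real.sqrt 2 := by
  rw [show (1:ℝ) = Real.sqrt 1 by simp]
  exact Real.sqrt_lt_sqrt (by norm_num) (by norm_num)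

lemma sqrt2_lt_two : Real.sqrt 2 < 2 := by
  nlinarith [Real.sq_sqrt (by norm_num : (0:ℝ) ≤ 2), Real.sqrt_nonneg 2]

/-- Classification of the roots of `R01x` with a given `δ`-free part. -/
lemma classify1 {k l : ℕ} {u : Vkl k l} (hu : u.1 = 0) {m : ℤ}
    (h : u + m • del ∈ R01x k l) :
    (m % 2 = 1 ∧ ∃ σ j, σ ∈ sgns ∧ u = σ • dl j) ∨
    (m % 2 = 0 ∧ ∃ σ τ j s, σ ∈ sgns ∧ τ ∈ sgns ∧ j ≠ s ∧ u = σ • dl j + τ • dl s) ∨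
    (m % 4 = 0 ∧ ∃ σ j, σ ∈ sgns ∧ u = σ • ((2 : ℝ) • dl j)) := by
  rcases h with (⟨m', σ, j, hσ, he⟩ | ⟨m', σ, τ, j, s, hσ, hτ, hjs, he⟩) | ⟨m', σ, j, hσ, he⟩
  · have h1 := congrArg Prod.fst he
    simp [del, dl, hu, Prod.fst_add] at h1
    have hm : m = 2 * m' + 1 := Int.cast_injective (α := ℝ) (by push_cast; linarith)
    subst hm
    refine Or.inl ⟨by omega, σ, j, hσ, ?_⟩
    exact add_right_cancel (he.trans (add_comm _ _))
  · have h1 := congrArg Prod.fst he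
    simp [del, dl, hu, Prod.fst_add] at h1
    have hm : m = 2 * m' := Int.cast_injective (α := ℝ) (by push_cast; linarith)
    subst hm
    refine Or.inr (Or.inl ⟨by omega, σ, τ, j, s, hσ, hτ, hjs, ?_⟩)
    have h2 : u + (2 * m') • del = (σ • dl j + τ • dl s) + (2 * m') • del := by
      rw [he]; abel
    exact add_right_cancel h2
  · have h1 := congrArg Prod.fst he
    simp [del, dl, hu, Prod.fst_add] at h1
    have hm : m = 4 * m' := Int.cast_injective (α := ℝ) (by push_cast; linarith)
    subst hm
    refine Or.inr (Or.inr ⟨by omega, σ, j, hσ, ?_⟩)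
    exact add_right_cancel (he.trans (add_comm _ _))

lemma build1_short {k l : ℕ} {u : Vkl k l} {σ : ℝ} {j : Fin l} (hσ : σ ∈ sgns)
    (hu : u = σ • dl j) {m : ℤ} (hm : m % 2 = 1) : u + m • del ∈ R01x k l := by
  obtain ⟨m', rfl⟩ : ∃ t, m = 2 * t + 1 := ⟨m / 2, by omega⟩
  exact Or.inl (Or.inl ⟨m', σ, j, hσ, by rw [hu, add_comm]⟩)

lemma build1_mid {k l : ℕ} {u : Vkl k l} {σ τ : ℝ} {j s : Fin l} (hσ : σ ∈ sgns)
    (hτ : τ ∈ sgns) (hjs : j ≠ s) (hu : u = σ • dl j + τ • dl s) {m : ℤ}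
    (hm : m % 2 = 0) : u + m • del ∈ R01x k l := by
  obtain ⟨m', rfl⟩ : ∃ t, m = 2 * t := ⟨m / 2, by omega⟩
  exact Or.inl (Or.inr ⟨m', σ, τ, j, s, hσ, hτ, hjs, by rw [hu]; abel⟩)

lemma build1_long {k l : ℕ} {u : Vkl k l} {σ : ℝ} {j : Fin l} (hσ : σ ∈ sgns)
    (hu : u = σ • ((2:ℝ) • dl j)) {m : ℤ} (hm : m % 4 = 0) : u + m • del ∈ R01x k l := by
  obtain ⟨m', rfl⟩ : ∃ t, m = 4 * t := ⟨m / 4, by omega⟩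
  exact Or.inr ⟨m', σ, j, hσ, by rw [hu, add_comm]⟩

/-- Classification of the roots of `R02x` with a given `δ`-free part. -/
lemma classify2 {k l : ℕ} {u : Vkl k l} (hu : u.1 = 0) {m : ℤ}
    (h : u + m • del ∈ R02x k l) :
    (m % 2 = 0 ∧ ∃ σ i, σ ∈ sgns ∧ u = σ • eps i) ∨
    (m % 2 = 0 ∧ ∃ σ τ i r, σ ∈ sgns ∧ τ ∈ sgns ∧ i ≠ r ∧ u = σ • eps i + τ • eps r) ∨
    (m % 4 = 2 ∧ ∃ σ i, σ ∈ sgns ∧ u = σ • ((2 : ℝ) • eps i)) := by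
  rcases h with (⟨m', σ, i, hσ, he⟩ | ⟨m', σ, τ, i, r, hσ, hτ, hir, he⟩) | ⟨m', σ, i, hσ, he⟩
  · have h1 := congrArg Prod.fst he
    simp [del, eps, hu, Prod.fst_add] at h1
    have hm : m = 2 * m' := Int.cast_injective (α := ℝ) (by push_cast; linarith)
    subst hm
    refine Or.inl ⟨by omega, σ, i, hσ, ?_⟩
    exact add_right_cancel (he.trans (add_comm _ _))
  · have h1 := congrArg Prod.fst he
    simp [del, eps, hu, Prod.fst_add] at h1
    have hm : m = 2 * m' := Int.cast_injective (α := ℝ) (by push_cast; linarith)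
    subst hm
    refine Or.inr (Or.inl ⟨by omega, σ, τ, i, r, hσ, hτ, hir, ?_⟩)
    have h2 : u + (2 * m') • del = (σ • eps i + τ • eps r) + (2 * m') • del := by
      rw [he]; abel
    exact add_right_cancel h2
  · have h1 := congrArg Prod.fst he
    simp [del, eps, hu, Prod.fst_add] at h1
    have hm : m = 4 * m' + 2 := Int.cast_injective (α := ℝ) (by push_cast; linarith)
    subst hm
    refine Or.inr (Or.inr ⟨by omega, σ, i, hσ, ?_⟩)
    exact add_right_cancel (he.trans (add_comm _ _))

lemma build2_short {k l : ℕ} {u : Vkl k l} {σ : ℝ} {i : Fin k} (hσ : σ ∈ sgns)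
    (hu : u = σ • eps i) {m : ℤ} (hm : m % 2 = 0) : u + m • del ∈ R02x k l := by
  obtain ⟨m', rfl⟩ : ∃ t, m = 2 * t := ⟨m / 2, by omega⟩
  exact Or.inl (Or.inl ⟨m', σ, i, hσ, by rw [hu, add_comm]⟩)

lemma build2_mid {k l : ℕ} {u : Vkl k l} {σ τ : ℝ} {i r : Fin k} (hσ : σ ∈ sgns)
    (hτ : τ ∈ sgns) (hir : i ≠ r) (hu : u = σ • eps i + τ • eps r) {m : ℤ}
    (hm : m % 2 = 0) : u + m • del ∈ R02x k l := by
  obtain ⟨m', rfl⟩ : ∃ t, m = 2 * t := ⟨m / 2, by omega⟩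
  exact Or.inl (Or.inr ⟨m', σ, τ, i, r, hσ, hτ, hir, by rw [hu]; abel⟩)

lemma build2_long {k l : ℕ} {u : Vkl k l} {σ : ℝ} {i : Fin k} (hσ : σ ∈ sgns)
    (hu : u = σ • ((2:ℝ) • eps i)) {m : ℤ} (hm : m % 4 = 2) : u + m • del ∈ R02x k l := by
  obtain ⟨m', rfl⟩ : ∃ t, m = 4 * t + 2 := ⟨m / 4, by omega⟩
  exact Or.inr ⟨m', σ, i, hσ, by rw [hu, add_comm]⟩

/-- Two short `δ`-roots cannot sum to a short `δ`-root. -/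
lemma no_sss_dl {k l : ℕ} {σ τ ρ : ℝ} {j s t : Fin l} (hσ : σ ∈ sgns) (hτ : τ ∈ sgns)
    (hρ : ρ ∈ sgns) (he : (σ • dl j + τ • dl s : Vkl k l) = ρ • dl t) : False := by
  have h1 := congrArg (fun w : Vkl k l => ∑ x, w.2.2 x) he
  simp [dl, Pi.smul_apply, smul_eq_mul, Finset.sum_add_distrib, sum_single'] at h1
  rcases hσ with rfl | rfl <;> rcases hτ with rfl | rfl <;> rcases hρ with rfl | rfl <;>
    norm_num at h1

/-- Two long `ε`-roots cannot sum to a long `ε`-root. -/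
lemma no_lll_eps {k l : ℕ} {σ τ ρ : ℝ} {i r t : Fin k}
    (hσ : σ ∈ sgns) (hτ : τ ∈ sgns) (hρ : ρ ∈ sgns)
    (he : (σ • ((2:ℝ) • eps i) + τ • ((2:ℝ) • eps r) : Vkl k l) = ρ • ((2:ℝ) • eps t)) :
    False := by
  have h1 := congrArg (fun w : Vkl k l => ∑ x, w.2.1 x) he
  simp [eps, Pi.smul_apply, smul_eq_mul, Finset.sum_add_distrib, sum_single',
    smul_smul] at h1
  rcases hσ with rfl | rfl <;> rcases hτ with rfl | rfl <;> rcases hρ with rfl | rfl <;>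
    norm_num at h1

/-- Property (2.8) of the paper for type `A(2k,2ℓ)⁽⁴⁾`: for `i = 1, 2`, if `u`,
`v` and `u + v` lie in `Ṙ₀(i)^×` and `‖u‖ = ‖v‖ ≤ ‖u+v‖`, then
`S_{u+v}(i) ⊆ S_u(i) + S_v(i)`. -/
theorem S_sum_A4 (k l : ℕ) (W : Set (Vkl k l)) (hW : W = R01x k l ∨ W = R02x k l)
    (u v : Vkl k l)
    (hu0 : u.1 = 0) (hv0 : v.1 = 0)
    (hu : u ≠ 0 ∧ ∃ m : ℤ, u + m • del ∈ W)
    (hv : v ≠ 0 ∧ ∃ m : ℤ, v + m • del ∈ W)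
    (huv : u + v ≠ 0 ∧ ∃ m : ℤ, (u + v) + m • del ∈ W)
    (hlen : nrm u = nrm v) (hlen' : nrm v ≤ nrm (u + v)) :
    ∀ m : ℤ, (u + v) + m • del ∈ W →
      ∃ m₁ m₂ : ℤ, m = m₁ + m₂ ∧ u + m₁ • del ∈ W ∧ v + m₂ • del ∈ W := by
  intro m hm
  have huv0 : (u + v).1 = 0 := by simp [Prod.fst_add, hu0, hv0]
  rcases hW with rfl | rfl
  · -- `W = R01x`
    obtain ⟨-, mu, hmu⟩ := hu
    obtain ⟨-, mv, hmv⟩ := hv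
    have hcm := classify1 huv0 hm
    rcases classify1 hu0 hmu with ⟨-, σ, j, hσ, hueq⟩ |
        ⟨-, σ, σ', j, j', hσ, hσ', hjj, hueq⟩ | ⟨-, σ, j, hσ, hueq⟩ <;>
      rcases classify1 hv0 hmv with ⟨-, τ, s, hτ, hveq⟩ |
        ⟨-, τ, τ', s, s', hτ, hτ', hss, hveq⟩ | ⟨-, τ, s, hτ, hveq⟩
    · -- short, short
      rcases hcm with ⟨hmp, ρ, t, hρ, hweq⟩ | ⟨hmp, -⟩ | ⟨hmp, -⟩
      · rw [hueq, hveq] at hweq; exact absurd hweq (fun h => no_sss_dl hσ hτ hρ h)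
      · exact ⟨1, m - 1, by ring, build1_short hσ hueq (by omega),
          build1_short hτ hveq (by omega)⟩
      · exact ⟨1, m - 1, by ring, build1_short hσ hueq (by omega),
          build1_short hτ hveq (by omega)⟩
    · -- short, mid
      rw [hueq, hveq, nrm_dl_short hσ, nrm_dl_mid hτ hτ' hss] at hlen
      exact absurd hlen (by linarith [one_lt_sqrt2])
    · -- short, long
      rw [hueq, hveq, nrm_dl_short hσ, nrm_dl_long hτ] at hlen
      norm_num at hlen
    · -- mid, short
      rw [hueq, hveq, nrm_dl_mid hσ hσ' hjj, nrm_dl_short hτ] at hlen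
      exact absurd hlen (by linarith [one_lt_sqrt2])
    · -- mid, mid
      rcases hcm with ⟨hmp, ρ, t, hρ, hweq⟩ | ⟨hmp, -⟩ | ⟨hmp, -⟩
      · rw [hweq, nrm_dl_short hρ, hveq, nrm_dl_mid hτ hτ' hss] at hlen'
        exact absurd hlen' (by linarith [one_lt_sqrt2])
      · exact ⟨0, m, by ring, build1_mid hσ hσ' hjj hueq (by omega),
          build1_mid hτ hτ' hss hveq (by omega)⟩
      · exact ⟨0, m, by ring, build1_mid hσ hσ' hjj hueq (by omega),
          build1_mid hτ hτ' hss hveq (by omega)⟩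
    · -- mid, long
      rw [hueq, hveq, nrm_dl_mid hσ hσ' hjj, nrm_dl_long hτ] at hlen
      exact absurd hlen (by linarith [sqrt2_lt_two])
    · -- long, short
      rw [hueq, hveq, nrm_dl_long hσ, nrm_dl_short hτ] at hlen
      norm_num at hlen
    · -- long, mid
      rw [hueq, hveq, nrm_dl_long hσ, nrm_dl_mid hτ hτ' hss] at hlen
      exact absurd hlen (by linarith [sqrt2_lt_two])
    · -- long, long
      rcases hcm with ⟨hmp, ρ, t, hρ, hweq⟩ | ⟨hmp, ρ, ρ', t, t', hρ, hρ', htt, hweq⟩ |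
          ⟨hmp, -⟩
      · rw [hweq, nrm_dl_short hρ, hveq, nrm_dl_long hτ] at hlen'
        norm_num at hlen'
      · rw [hweq, nrm_dl_mid hρ hρ' htt, hveq, nrm_dl_long hτ] at hlen'
        exact absurd hlen' (by linarith [sqrt2_lt_two])
      · exact ⟨0, m, by ring, build1_long hσ hueq (by omega),
          build1_long hτ hveq (by omega)⟩
  · -- `W = R02x`
    obtain ⟨-, mu, hmu⟩ := hu
    obtain ⟨-, mv, hmv⟩ := hv
    have hcm := classify2 huv0 hm
    have hmeven : m % 2 = 0 := by
      rcases hcm with ⟨hmp, -⟩ | ⟨hmp, -⟩ | ⟨hmp, -⟩ <;> omega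
    rcases classify2 hu0 hmu with ⟨-, σ, j, hσ, hueq⟩ |
        ⟨-, σ, σ', j, j', hσ, hσ', hjj, hueq⟩ | ⟨-, σ, j, hσ, hueq⟩ <;>
      rcases classify2 hv0 hmv with ⟨-, τ, s, hτ, hveq⟩ |
        ⟨-, τ, τ', s, s', hτ, hτ', hss, hveq⟩ | ⟨-, τ, s, hτ, hveq⟩
    · exact ⟨0, m, by ring, build2_short hσ hueq (by omega), build2_short hτ hveq hmeven⟩
    · exact ⟨0, m, by ring, build2_short hσ hueq (by omega),
        build2_mid hτ hτ' hss hveq hmeven⟩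
    · -- short, long
      rw [hueq, hveq, nrm_eps_short hσ, nrm_eps_long hτ] at hlen
      norm_num at hlen
    · exact ⟨0, m, by ring, build2_mid hσ hσ' hjj hueq (by omega),
        build2_short hτ hveq hmeven⟩
    · exact ⟨0, m, by ring, build2_mid hσ hσ' hjj hueq (by omega),
        build2_mid hτ hτ' hss hveq hmeven⟩
    · -- mid, long
      rw [hueq, hveq, nrm_eps_mid hσ hσ' hjj, nrm_eps_long hτ] at hlen
      exact absurd hlen (by linarith [sqrt2_lt_two])
    · -- long, short
      rw [hueq, hveq, nrm_eps_long hσ, nrm_eps_short hτ] at hlen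
      norm_num at hlen
    · -- long, mid
      rw [hueq, hveq, nrm_eps_long hσ, nrm_eps_mid hτ hτ' hss] at hlen
      exact absurd hlen (by linarith [sqrt2_lt_two])
    · -- long, long
      rcases hcm with ⟨hmp, ρ, t, hρ, hweq⟩ | ⟨hmp, ρ, ρ', t, t', hρ, hρ', htt, hweq⟩ |
          ⟨hmp, ρ, t, hρ, hweq⟩
      · rw [hweq, nrm_eps_short hρ, hveq, nrm_eps_long hτ] at hlen'
        norm_num at hlen'
      · rw [hweq, nrm_eps_mid hρ hρ' htt, hveq, nrm_eps_long hτ] at hlen'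
        exact absurd hlen' (by linarith [sqrt2_lt_two])
      · rw [hueq, hveq] at hweq
        exact absurd hweq (fun h => no_lll_eps hσ hτ hρ h)
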